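/- (Convergence of PFASST in the stiff limit.) Assume Q_Δ, A, Q̃_Δ and Ã are invertible and (I_M − Q_Δ^{-1} Q)^M = 0 (LU-trick preconditioner). Then for every integer k ≥ M there exist constants c > 0 (depending on k) and μ* > 0 such that for all μ > μ*, the matrices P̂(μ) and P̃(μ) are invertible and the PFASST iteration matrix with k smoothing steps satisfies ρ( T_S(μ)^k · T_CGC(μ) ) ≤ c / μ. -/

import Mathlib

/-!
STATEMENT 13 (Convergence of PFASST in the stiff limit): Assume Q_Δ, A, Q̃_Δ and Ã
are invertible and (I_M − Q_Δ⁻¹ Q)^M = 0 (LU-trick preconditioner). Then for every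
integer k ≥ M there exist c > 0 and μ* > 0 such that for all μ > μ*, P̂(μ) and
P̃(μ) are invertible and ρ( T_S(μ)^k · T_CGC(μ) ) ≤ c / μ.
-/

noncomputable section

open Matrix
open scoped Kronecker

/-- Complexification of a real matrix. -/
def cmplx {m n : Type*} (A : Matrix m n ℝ) : Matrix m n ℂ := A.map (fun x => (x : ℂ))

/-- The matrix `E` with ones on the first subdiagonal and zeros elsewhere. -/
def Emat (L : ℕ) : Matrix (Fin L) (Fin L) ℂ :=
  Matrix.of fun i j => if (i : ℕ) = (j : ℕ) + 1 then 1 else 0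

/-- The matrix `N_M` whose last column consists of ones, all other entries zero. -/
def Nmat (M : ℕ) : Matrix (Fin M) (Fin M) ℂ :=
  Matrix.of fun _ j => if (j : ℕ) = M - 1 then 1 else 0

/-- `H = N_M ⊗ I_N`. -/
def Hmat (M N : ℕ) : Matrix (Fin M × Fin N) (Fin M × Fin N) ℂ :=
  Nmat M ⊗ₖ (1 : Matrix (Fin N) (Fin N) ℂ)

/-- `E ⊗ H`. -/
def EH (L M N : ℕ) : Matrix (Fin L × Fin M × Fin N) (Fin L × Fin M × Fin N) ℂ :=
  Emat L ⊗ₖ Hmat M N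

/-- The composite collocation matrix `C(μ) = I − μ (I_L ⊗ Q ⊗ A) − E ⊗ H`. -/
def Cmat (L : ℕ) {M N : ℕ} (Q : Matrix (Fin M) (Fin M) ℝ) (A : Matrix (Fin N) (Fin N) ℂ)
    (μ : ℝ) : Matrix (Fin L × Fin M × Fin N) (Fin L × Fin M × Fin N) ℂ :=
  1 - (μ : ℂ) • ((1 : Matrix (Fin L) (Fin L) ℂ) ⊗ₖ (cmplx Q ⊗ₖ A)) - EH L M N

/-- The approximative block Jacobi preconditioner `P̂(μ) = I − μ (I_L ⊗ Q_Δ ⊗ A)`. -/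
def Phat (L : ℕ) {M N : ℕ} (QΔ : Matrix (Fin M) (Fin M) ℝ) (A : Matrix (Fin N) (Fin N) ℂ)
    (μ : ℝ) : Matrix (Fin L × Fin M × Fin N) (Fin L × Fin M × Fin N) ℂ :=
  1 - (μ : ℂ) • ((1 : Matrix (Fin L) (Fin L) ℂ) ⊗ₖ (cmplx QΔ ⊗ₖ A))

/-- The smoother iteration matrix `T_S(μ) = I − P̂(μ)⁻¹ C(μ)`. -/
def Tsmooth (L : ℕ) {M N : ℕ} (Q QΔ : Matrix (Fin M) (Fin M) ℝ)
    (A : Matrix (Fin N) (Fin N) ℂ) (μ : ℝ) :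
    Matrix (Fin L × Fin M × Fin N) (Fin L × Fin M × Fin N) ℂ :=
  1 - (Phat L QΔ A μ)⁻¹ * Cmat L Q A μ

/-- Restriction operator `T_F^C = I_L ⊗ T_{F,Q}^C ⊗ T_{F,A}^C`. -/
def TFCmat (L : ℕ) {M N M' N' : ℕ} (TFQ : Matrix (Fin M') (Fin M) ℝ)
    (TFA : Matrix (Fin N') (Fin N) ℂ) :
    Matrix (Fin L × Fin M' × Fin N') (Fin L × Fin M × Fin N) ℂ :=
  (1 : Matrix (Fin L) (Fin L) ℂ) ⊗ₖ (cmplx TFQ ⊗ₖ TFA)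

/-- Interpolation operator `T_C^F = I_L ⊗ T_{C,Q}^F ⊗ T_{C,A}^F`. -/
def TCFmat (L : ℕ) {M N M' N' : ℕ} (TCQ : Matrix (Fin M) (Fin M') ℝ)
    (TCA : Matrix (Fin N) (Fin N') ℂ) :
    Matrix (Fin L × Fin M × Fin N) (Fin L × Fin M' × Fin N') ℂ :=
  (1 : Matrix (Fin L) (Fin L) ℂ) ⊗ₖ (cmplx TCQ ⊗ₖ TCA)

/-- The coarse approximative block Gauss-Seidel preconditioner
`P̃(μ) = I − μ (I_L ⊗ Q̃_Δ ⊗ Ã) − E ⊗ H̃`. -/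
def Ptilde (L : ℕ) {M' N' : ℕ} (QΔt : Matrix (Fin M') (Fin M') ℝ)
    (At : Matrix (Fin N') (Fin N') ℂ) (μ : ℝ) :
    Matrix (Fin L × Fin M' × Fin N') (Fin L × Fin M' × Fin N') ℂ :=
  1 - (μ : ℂ) • ((1 : Matrix (Fin L) (Fin L) ℂ) ⊗ₖ (cmplx QΔt ⊗ₖ At)) - EH L M' N'

/-- The coarse-grid correction iteration matrix
`T_CGC(μ) = I − T_C^F P̃(μ)⁻¹ T_F^C C(μ)`. -/
def Tcgc (L : ℕ) {M N M' N' : ℕ} (Q : Matrix (Fin M) (Fin M) ℝ)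
    (A : Matrix (Fin N) (Fin N) ℂ)
    (QΔt : Matrix (Fin M') (Fin M') ℝ) (At : Matrix (Fin N') (Fin N') ℂ)
    (TFQ : Matrix (Fin M') (Fin M) ℝ) (TFA : Matrix (Fin N') (Fin N) ℂ)
    (TCQ : Matrix (Fin M) (Fin M') ℝ) (TCA : Matrix (Fin N) (Fin N') ℂ) (μ : ℝ) :
    Matrix (Fin L × Fin M × Fin N) (Fin L × Fin M × Fin N) ℂ :=
  1 - TCFmat L TCQ TCA * (Ptilde L QΔt At μ)⁻¹ * TFCmat L TFQ TFA * Cmat L Q A μ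


/-! ### Auxiliary lemmas -/

attribute [local instance] Matrix.linftyOpNormedAddCommGroup Matrix.linftyOpNormedRing
  Matrix.linftyOpNormedAlgebra Matrix.linftyOpNormedSpace

lemma one_add_small_inv {R : Type*} [NormedRing R] [NormOneClass R] [CompleteSpace R]
    (t : R) (ht : ‖t‖ ≤ 1/2) :
    ∃ w : R, (1 + t) * w = 1 ∧ w * (1 + t) = 1 ∧ ‖w‖ ≤ 2 := by
  have h1 : ‖-t‖ < 1 := by rw [norm_neg]; linarith
  refine ⟨↑(Units.oneSub (-t) h1)⁻¹, ?_, ?_, ?_⟩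
  · have := (Units.oneSub (-t) h1).mul_inv
    simpa [Units.val_oneSub, sub_neg_eq_add] using this
  · have := (Units.oneSub (-t) h1).inv_mul
    simpa [Units.val_oneSub, sub_neg_eq_add] using this
  · set w : R := ↑(Units.oneSub (-t) h1)⁻¹ with hw
    have hmul : w * (1 + t) = 1 := by
      have := (Units.oneSub (-t) h1).inv_mul
      simpa [Units.val_oneSub, sub_neg_eq_add, hw] using this
    have heq : w = 1 - w * t := by
      have h := hmul
      rw [mul_add, mul_one] at h
      exact eq_sub_of_add_eq h
    have hb : ‖w‖ ≤ ‖(1:R)‖ + ‖w‖ * ‖t‖ := by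
      calc ‖w‖ = ‖1 - w * t‖ := by rw [← heq]
        _ ≤ ‖(1:R)‖ + ‖w * t‖ := norm_sub_le _ _
        _ ≤ ‖(1:R)‖ + ‖w‖ * ‖t‖ := by gcongr; exact norm_mul_le _ _
    have h2 : ‖w‖ * ‖t‖ ≤ ‖w‖ * (1/2) :=
      mul_le_mul_of_nonneg_left ht (norm_nonneg _)
    rw [norm_one] at hb
    linarith

lemma matrix_pert {n : Type*} [Fintype n] [DecidableEq n] [Nonempty n]
    (u v uinv : Matrix n n ℂ) (h1 : u * uinv = 1) (_h2 : uinv * u = 1)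
    (h3 : ‖uinv * v‖ ≤ 1/2) :
    IsUnit (u + v) ∧ ‖(u + v)⁻¹‖ ≤ 2 * ‖uinv‖ := by
  haveI : CompleteSpace (Matrix n n ℂ) := FiniteDimensional.complete ℂ _
  obtain ⟨w, hw1, _hw2, hw3⟩ := one_add_small_inv (uinv * v) h3
  have key : (u + v) * (w * uinv) = 1 := by
    have hfac : u + v = u * (1 + uinv * v) := by
      rw [mul_add, mul_one, ← mul_assoc, h1, one_mul]
    rw [hfac]
    calc u * (1 + uinv * v) * (w * uinv) = u * ((1 + uinv * v) * w) * uinv := by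
          noncomm_ring
      _ = 1 := by rw [hw1, mul_one, h1]
  have hunit : IsUnit (u + v) :=
    (Matrix.isUnit_iff_isUnit_det _).mpr (Matrix.isUnit_det_of_right_inverse key)
  refine ⟨hunit, ?_⟩
  rw [Matrix.inv_eq_right_inv key]
  calc ‖w * uinv‖ ≤ ‖w‖ * ‖uinv‖ := norm_mul_le _ _
    _ ≤ 2 * ‖uinv‖ := by gcongr

lemma norm_add_pow_sub {R : Type*} [NormedRing R] [NormOneClass R] (x y : R) :
    ∀ n : ℕ, ‖(x + y) ^ n - x ^ n‖ ≤ (‖x‖ + ‖y‖) ^ n - ‖x‖ ^ n := by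
  intro n
  induction n with
  | zero => simp
  | succ n ih =>
    have hid : (x + y) ^ (n+1) - x ^ (n+1)
        = ((x + y) ^ n - x ^ n) * (x + y) + x ^ n * y := by
      rw [pow_succ, pow_succ]; noncomm_ring
    have hxn : ‖x ^ n‖ ≤ ‖x‖ ^ n := norm_pow_le x n
    calc ‖(x + y) ^ (n+1) - x ^ (n+1)‖
        ≤ ‖((x + y) ^ n - x ^ n) * (x + y)‖ + ‖x ^ n * y‖ := by
          rw [hid]; exact norm_add_le _ _
      _ ≤ ‖(x + y) ^ n - x ^ n‖ * ‖x + y‖ + ‖x ^ n‖ * ‖y‖ := by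
          gcongr <;> exact norm_mul_le _ _
      _ ≤ ((‖x‖ + ‖y‖) ^ n - ‖x‖ ^ n) * (‖x‖ + ‖y‖) + ‖x‖ ^ n * ‖y‖ := by
          have hxy : ‖x‖ ^ n ≤ (‖x‖ + ‖y‖) ^ n := by
            gcongr
            linarith [norm_nonneg y]
          have hA := mul_le_mul ih (norm_add_le x y) (norm_nonneg _) (by linarith)
          have hB := mul_le_mul_of_nonneg_right hxn (norm_nonneg y)
          linarith
      _ = (‖x‖ + ‖y‖) ^ (n+1) - ‖x‖ ^ (n+1) := by ring

lemma real_pow_bound (a b : ℝ) (ha : 0 ≤ a) (hb : 0 ≤ b) (hb1 : b ≤ 1) :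
    ∀ n : ℕ, (a + b) ^ n - a ^ n ≤ n * b * (a + 1) ^ n := by
  intro n
  induction n with
  | zero => simp
  | succ n ih =>
    have h1 : (0:ℝ) ≤ (a+1)^n := by positivity
    have h2 : a ^ n ≤ (a+1)^n := by gcongr; linarith
    have h3 : (a+1)^n ≤ (a+1)^(n+1) := by
      calc (a+1)^n = (a+1)^n * 1 := by ring
        _ ≤ (a+1)^n * (a+1) := by gcongr; linarith
        _ = (a+1)^(n+1) := by ring
    have hid : (a + b) ^ (n+1) - a ^ (n+1) = (a+b) * ((a+b)^n - a^n) + b * a^n := by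
      ring
    rw [hid]
    have h5 : (a+b) * ((a+b)^n - a^n) ≤ (a+1) * (n * b * (a+1)^n) := by
      have hnn := sub_nonneg.mpr (pow_le_pow_left₀ ha (by linarith : a ≤ a + b) n)
      apply mul_le_mul (by linarith) ih hnn (by linarith)
    have h6 : b * a^n ≤ b * (a+1)^n := by gcongr
    have h7 : (a+1) * (n * b * (a+1)^n) + b * (a+1)^n ≤ (n+1) * b * (a+1)^(n+1) := by
      have e1 : (a+1) * (n * b * (a+1)^n) + b * (a+1)^n
          = (n * b) * (a+1)^(n+1) + b * (a+1)^n := by ring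
      rw [e1]
      have e2 : ((n:ℝ)+1) * b * (a+1)^(n+1) = n * b * (a+1)^(n+1) + b * (a+1)^(n+1) := by ring
      rw [e2]
      gcongr
    push_cast
    linarith

lemma cmplx_ring {m : Type*} [Fintype m] [DecidableEq m] (A : Matrix m m ℝ) :
    cmplx A = Complex.ofRealHom.mapMatrix A := rfl

lemma cmplx_mul {m : Type*} [Fintype m] [DecidableEq m] (A B : Matrix m m ℝ) :
    cmplx (A * B) = cmplx A * cmplx B := by
  rw [cmplx_ring, cmplx_ring, cmplx_ring, _root_.map_mul]

lemma cmplx_one {m : Type*} [Fintype m] [DecidableEq m] :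
    cmplx (1 : Matrix m m ℝ) = 1 := by
  rw [cmplx_ring, _root_.map_one]

lemma cmplx_zero {m : Type*} [Fintype m] [DecidableEq m] :
    cmplx (0 : Matrix m m ℝ) = 0 := by
  rw [cmplx_ring, _root_.map_zero]

lemma cmplx_sub {m : Type*} [Fintype m] [DecidableEq m] (A B : Matrix m m ℝ) :
    cmplx (A - B) = cmplx A - cmplx B := by
  rw [cmplx_ring, cmplx_ring, cmplx_ring, _root_.map_sub]

lemma cmplx_add {m : Type*} [Fintype m] [DecidableEq m] (A B : Matrix m m ℝ) :
    cmplx (A + B) = cmplx A + cmplx B := by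
  rw [cmplx_ring, cmplx_ring, cmplx_ring, _root_.map_add]

lemma cmplx_pow {m : Type*} [Fintype m] [DecidableEq m] (A : Matrix m m ℝ) (n : ℕ) :
    cmplx (A ^ n) = cmplx A ^ n := by
  rw [cmplx_ring, cmplx_ring, _root_.map_pow]

lemma cmplx_isUnit_det {m : Type*} [Fintype m] [DecidableEq m] {A : Matrix m m ℝ}
    (h : IsUnit A) : IsUnit (cmplx A).det := by
  have hd : IsUnit A.det := (Matrix.isUnit_iff_isUnit_det A).mp h
  have hdet : (cmplx A).det = (A.det : ℂ) := (RingHom.map_det Complex.ofRealHom A).symm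
  rw [hdet, isUnit_iff_ne_zero, Complex.ofReal_ne_zero]
  rw [isUnit_iff_ne_zero] at hd
  exact hd

lemma kron_pow {m n : Type*} [Fintype m] [DecidableEq m] [Fintype n] [DecidableEq n]
    (X : Matrix m m ℂ) (Y : Matrix n n ℂ) (p : ℕ) :
    (X ⊗ₖ Y) ^ p = (X ^ p) ⊗ₖ (Y ^ p) := by
  induction p with
  | zero => simp [Matrix.one_kronecker_one]
  | succ p ih => rw [pow_succ, pow_succ, pow_succ, ih, Matrix.mul_kronecker_mul]

lemma kron_neg_left {l m n p : Type*} (X : Matrix l m ℂ) (Y : Matrix n p ℂ) :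
    (-X) ⊗ₖ Y = -(X ⊗ₖ Y) := by
  ext ⟨i, j⟩ ⟨a, b⟩
  simp [Matrix.kroneckerMap_apply]

lemma kron_neg_right {l m n p : Type*} (X : Matrix l m ℂ) (Y : Matrix n p ℂ) :
    X ⊗ₖ (-Y) = -(X ⊗ₖ Y) := by
  ext ⟨i, j⟩ ⟨a, b⟩
  simp [Matrix.kroneckerMap_apply]

set_option maxHeartbeats 2000000 in
theorem stmt_13 (L M N M' N' : ℕ) (hL : 0 < L) (hM : 0 < M) (hN : 0 < N)
    (hM' : 0 < M') (hN' : 0 < N')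
    (Q QΔ : Matrix (Fin M) (Fin M) ℝ) (A : Matrix (Fin N) (Fin N) ℂ)
    (QΔt : Matrix (Fin M') (Fin M') ℝ) (At : Matrix (Fin N') (Fin N') ℂ)
    (TFQ : Matrix (Fin M') (Fin M) ℝ) (TFA : Matrix (Fin N') (Fin N) ℂ)
    (TCQ : Matrix (Fin M) (Fin M') ℝ) (TCA : Matrix (Fin N) (Fin N') ℂ)
    (hQΔ : IsUnit QΔ) (hA : IsUnit A) (hQΔt : IsUnit QΔt) (hAt : IsUnit At)
    (hnil : ((1 : Matrix (Fin M) (Fin M) ℝ) - QΔ⁻¹ * Q) ^ M = 0)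
    (k : ℕ) (hk : M ≤ k) :
    ∃ c > (0 : ℝ), ∃ μs > (0 : ℝ), ∀ μ : ℝ, μs < μ →
      IsUnit (Phat L QΔ A μ) ∧ IsUnit (Ptilde L QΔt At μ) ∧
      spectralRadius ℂ
          ((Tsmooth L Q QΔ A μ) ^ k * Tcgc L Q A QΔt At TFQ TFA TCQ TCA μ) ≤
        ENNReal.ofReal (c / μ) := by
  classical
  haveI : Nonempty (Fin L) := Fin.pos_iff_nonempty.mp hL
  haveI : Nonempty (Fin M) := Fin.pos_iff_nonempty.mp hM
  haveI : Nonempty (Fin N) := Fin.pos_iff_nonempty.mp hN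
  haveI : Nonempty (Fin M') := Fin.pos_iff_nonempty.mp hM'
  haveI : Nonempty (Fin N') := Fin.pos_iff_nonempty.mp hN'
  haveI : CompleteSpace (Matrix (Fin L × Fin M × Fin N) (Fin L × Fin M × Fin N) ℂ) :=
    FiniteDimensional.complete ℂ _
  -- determinant facts
  have hQΔd : IsUnit QΔ.det := (Matrix.isUnit_iff_isUnit_det QΔ).mp hQΔ
  have hAd : IsUnit A.det := (Matrix.isUnit_iff_isUnit_det A).mp hA
  have hQΔtd : IsUnit QΔt.det := (Matrix.isUnit_iff_isUnit_det QΔt).mp hQΔt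
  have hAtd : IsUnit At.det := (Matrix.isUnit_iff_isUnit_det At).mp hAt
  -- main players
  set Bf : Matrix (Fin L × Fin M × Fin N) (Fin L × Fin M × Fin N) ℂ :=
    (1 : Matrix (Fin L) (Fin L) ℂ) ⊗ₖ (cmplx QΔ ⊗ₖ A) with hBf
  set Bfinv : Matrix (Fin L × Fin M × Fin N) (Fin L × Fin M × Fin N) ℂ :=
    (1 : Matrix (Fin L) (Fin L) ℂ) ⊗ₖ (cmplx QΔ⁻¹ ⊗ₖ A⁻¹) with hBfinv
  set Bc : Matrix (Fin L × Fin M' × Fin N') (Fin L × Fin M' × Fin N') ℂ :=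
    (1 : Matrix (Fin L) (Fin L) ℂ) ⊗ₖ (cmplx QΔt ⊗ₖ At) with hBc
  set Bcinv : Matrix (Fin L × Fin M' × Fin N') (Fin L × Fin M' × Fin N') ℂ :=
    (1 : Matrix (Fin L) (Fin L) ℂ) ⊗ₖ (cmplx QΔt⁻¹ ⊗ₖ At⁻¹) with hBcinv
  set S : Matrix (Fin L × Fin M × Fin N) (Fin L × Fin M × Fin N) ℂ :=
    (1 : Matrix (Fin L) (Fin L) ℂ) ⊗ₖ (cmplx (Q - QΔ) ⊗ₖ A) with hS
  set D : Matrix (Fin L × Fin M × Fin N) (Fin L × Fin M × Fin N) ℂ :=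
    (1 : Matrix (Fin L) (Fin L) ℂ) ⊗ₖ
      (cmplx ((1 : Matrix (Fin M) (Fin M) ℝ) - QΔ⁻¹ * Q) ⊗ₖ (1 : Matrix (Fin N) (Fin N) ℂ))
    with hD
  set X : Matrix (Fin L × Fin M × Fin N) (Fin L × Fin M × Fin N) ℂ :=
    (1 : Matrix (Fin L) (Fin L) ℂ) ⊗ₖ (cmplx Q ⊗ₖ A) with hX
  set K : Matrix (Fin L × Fin M × Fin N) (Fin L × Fin M × Fin N) ℂ := EH L M N - D with hK
  -- basic algebraic facts
  have f1 : Bf * Bfinv = 1 := by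
    rw [hBf, hBfinv, ← Matrix.mul_kronecker_mul, ← Matrix.mul_kronecker_mul,
      ← cmplx_mul, Matrix.mul_nonsing_inv _ hQΔd, Matrix.mul_nonsing_inv _ hAd,
      cmplx_one, one_mul, Matrix.one_kronecker_one, Matrix.one_kronecker_one]
  have f2 : Bfinv * Bf = 1 := by
    rw [hBf, hBfinv, ← Matrix.mul_kronecker_mul, ← Matrix.mul_kronecker_mul,
      ← cmplx_mul, Matrix.nonsing_inv_mul _ hQΔd, Matrix.nonsing_inv_mul _ hAd,
      cmplx_one, one_mul, Matrix.one_kronecker_one, Matrix.one_kronecker_one]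
  have f3 : Bc * Bcinv = 1 := by
    rw [hBc, hBcinv, ← Matrix.mul_kronecker_mul, ← Matrix.mul_kronecker_mul,
      ← cmplx_mul, Matrix.mul_nonsing_inv _ hQΔtd, Matrix.mul_nonsing_inv _ hAtd,
      cmplx_one, one_mul, Matrix.one_kronecker_one, Matrix.one_kronecker_one]
  have f4 : Bcinv * Bc = 1 := by
    rw [hBc, hBcinv, ← Matrix.mul_kronecker_mul, ← Matrix.mul_kronecker_mul,
      ← cmplx_mul, Matrix.nonsing_inv_mul _ hQΔtd, Matrix.nonsing_inv_mul _ hAtd,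
      cmplx_one, one_mul, Matrix.one_kronecker_one, Matrix.one_kronecker_one]
  have f5 : Bf * D = -S := by
    have hq : QΔ * ((1 : Matrix (Fin M) (Fin M) ℝ) - QΔ⁻¹ * Q) = -(Q - QΔ) := by
      rw [mul_sub, mul_one, ← mul_assoc, Matrix.mul_nonsing_inv _ hQΔd, one_mul]
      abel
    rw [hBf, hD, hS, ← Matrix.mul_kronecker_mul, ← Matrix.mul_kronecker_mul,
      ← cmplx_mul, hq]
    simp only [mul_one, one_mul, Matrix.mul_one, Matrix.one_mul]
    rw [show cmplx (-(Q - QΔ)) = -(cmplx (Q - QΔ)) by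
      rw [show -(Q - QΔ) = 0 - (Q - QΔ) by abel, cmplx_sub, cmplx_zero, zero_sub]]
    rw [kron_neg_left, kron_neg_right]
  have f6 : D ^ k = 0 := by
    have hDRk : ((1 : Matrix (Fin M) (Fin M) ℝ) - QΔ⁻¹ * Q) ^ k = 0 := by
      rw [← Nat.add_sub_cancel' hk, pow_add, hnil, zero_mul]
    rw [hD, kron_pow, kron_pow, ← cmplx_pow, hDRk, cmplx_zero,
      Matrix.zero_kronecker, Matrix.kronecker_zero]
  have f7 : Bf + S = X := by
    rw [hBf, hS, hX, ← Matrix.kronecker_add, ← Matrix.add_kronecker, ← cmplx_add,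
      add_sub_cancel]
  -- constants
  set c₁ : ℝ := 2 * ‖Bfinv‖ * ‖K‖ with hc₁
  set c₂ : ℝ := 1 + 2 * ‖TCFmat L TCQ TCA‖ * ‖Bcinv‖ * ‖TFCmat L TFQ TFA‖ *
    (1 + ‖X‖ + ‖EH L M N‖) with hc₂
  have hc₁0 : 0 ≤ c₁ := by positivity
  have hc₂0 : 1 ≤ c₂ := by
    rw [hc₂]
    have : (0:ℝ) ≤ 2 * ‖TCFmat L TCQ TCA‖ * ‖Bcinv‖ * ‖TFCmat L TFQ TFA‖ *
        (1 + ‖X‖ + ‖EH L M N‖) := by positivity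
    linarith
  refine ⟨(k : ℝ) * c₁ * (‖D‖ + 1) ^ k * c₂ + 1, ?_, 1 + 2 * ‖Bfinv‖ +
    2 * ‖Bcinv‖ * (1 + ‖EH L M' N'‖) + c₁, ?_, ?_⟩
  · have : (0:ℝ) ≤ (k : ℝ) * c₁ * (‖D‖ + 1) ^ k * c₂ := by positivity
    linarith
  · positivity
  intro μ hμ
  have hBfinv0 : (0:ℝ) ≤ ‖Bfinv‖ := norm_nonneg _
  have hBcinv0 : (0:ℝ) ≤ ‖Bcinv‖ := norm_nonneg _
  have hEHc0 : (0:ℝ) ≤ ‖EH L M' N'‖ := norm_nonneg _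
  have hμ1 : 1 < μ := by nlinarith [mul_nonneg hBcinv0 hEHc0]
  have hμ0 : 0 < μ := by linarith
  have hμc : (μ:ℂ) ≠ 0 := by exact_mod_cast ne_of_gt hμ0
  have hnμ : ‖(μ:ℂ)‖ = μ := by
    rw [Complex.norm_real, Real.norm_eq_abs, abs_of_pos hμ0]
  -- invertibility of Phat
  have hfine : 2 * ‖Bfinv‖ ≤ μ := by nlinarith [mul_nonneg hBcinv0 hEHc0]
  have hcoarse : 2 * ‖Bcinv‖ * (1 + ‖EH L M' N'‖) ≤ μ := by
    nlinarith [mul_nonneg hBcinv0 hEHc0]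
  have hμc₁ : c₁ ≤ μ := by nlinarith [mul_nonneg hBcinv0 hEHc0]
  have huinv_norm : ‖-((μ:ℂ)⁻¹ • Bfinv)‖ = μ⁻¹ * ‖Bfinv‖ := by
    rw [norm_neg, norm_smul, norm_inv, hnμ]
  have hu1 : -((μ:ℂ) • Bf) * -((μ:ℂ)⁻¹ • Bfinv) = 1 := by
    rw [neg_mul_neg, smul_mul_assoc, mul_smul_comm, f1, smul_smul,
      mul_inv_cancel₀ hμc, one_smul]
  have hu2 : -((μ:ℂ)⁻¹ • Bfinv) * -((μ:ℂ) • Bf) = 1 := by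
    rw [neg_mul_neg, smul_mul_assoc, mul_smul_comm, f2, smul_smul,
      inv_mul_cancel₀ hμc, one_smul]
  have hsmall : ‖-((μ:ℂ)⁻¹ • Bfinv) * (1 : Matrix (Fin L × Fin M × Fin N)
      (Fin L × Fin M × Fin N) ℂ)‖ ≤ 1/2 := by
    rw [mul_one, huinv_norm, inv_mul_le_iff₀ hμ0]
    linarith
  obtain ⟨hPunit', hPbound'⟩ := matrix_pert (-((μ:ℂ) • Bf)) 1 (-((μ:ℂ)⁻¹ • Bfinv))
    hu1 hu2 hsmall
  have hPeq : Phat L QΔ A μ = -((μ:ℂ) • Bf) + 1 := by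
    simp only [Phat, ← hBf]
    abel
  have hPunit : IsUnit (Phat L QΔ A μ) := by rw [hPeq]; exact hPunit'
  have hPbound : ‖(Phat L QΔ A μ)⁻¹‖ ≤ 2 * (μ⁻¹ * ‖Bfinv‖) := by
    rw [hPeq]
    calc ‖(-((μ:ℂ) • Bf) + 1)⁻¹‖ ≤ 2 * ‖-((μ:ℂ)⁻¹ • Bfinv)‖ := hPbound'
      _ = 2 * (μ⁻¹ * ‖Bfinv‖) := by rw [huinv_norm]
  -- invertibility of Ptilde
  have hv1 : -((μ:ℂ) • Bc) * -((μ:ℂ)⁻¹ • Bcinv) = 1 := by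
    rw [neg_mul_neg, smul_mul_assoc, mul_smul_comm, f3, smul_smul,
      mul_inv_cancel₀ hμc, one_smul]
  have hv2 : -((μ:ℂ)⁻¹ • Bcinv) * -((μ:ℂ) • Bc) = 1 := by
    rw [neg_mul_neg, smul_mul_assoc, mul_smul_comm, f4, smul_smul,
      inv_mul_cancel₀ hμc, one_smul]
  have hvinv_norm : ‖-((μ:ℂ)⁻¹ • Bcinv)‖ = μ⁻¹ * ‖Bcinv‖ := by
    rw [norm_neg, norm_smul, norm_inv, hnμ]
  have hsmall2 : ‖-((μ:ℂ)⁻¹ • Bcinv) * ((1 : Matrix (Fin L × Fin M' × Fin N')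
      (Fin L × Fin M' × Fin N') ℂ) - EH L M' N')‖ ≤ 1/2 := by
    calc ‖-((μ:ℂ)⁻¹ • Bcinv) * (1 - EH L M' N')‖
        ≤ ‖-((μ:ℂ)⁻¹ • Bcinv)‖ * ‖(1 : Matrix (Fin L × Fin M' × Fin N')
          (Fin L × Fin M' × Fin N') ℂ) - EH L M' N'‖ := norm_mul_le _ _
      _ ≤ (μ⁻¹ * ‖Bcinv‖) * (1 + ‖EH L M' N'‖) := by
          rw [hvinv_norm]
          gcongr
          calc ‖(1 : Matrix (Fin L × Fin M' × Fin N') (Fin L × Fin M' × Fin N') ℂ)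
              - EH L M' N'‖ ≤ ‖(1 : Matrix (Fin L × Fin M' × Fin N')
                (Fin L × Fin M' × Fin N') ℂ)‖ + ‖EH L M' N'‖ := norm_sub_le _ _
            _ = 1 + ‖EH L M' N'‖ := by rw [norm_one]
      _ ≤ 1/2 := by
          rw [inv_mul_eq_div, div_mul_eq_mul_div, div_le_iff₀ hμ0]
          nlinarith
  obtain ⟨hQunit', hQbound'⟩ := matrix_pert (-((μ:ℂ) • Bc))
    ((1 : Matrix (Fin L × Fin M' × Fin N') (Fin L × Fin M' × Fin N') ℂ) - EH L M' N')
    (-((μ:ℂ)⁻¹ • Bcinv)) hv1 hv2 hsmall2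
  have hQeq : Ptilde L QΔt At μ = -((μ:ℂ) • Bc) +
      ((1 : Matrix (Fin L × Fin M' × Fin N') (Fin L × Fin M' × Fin N') ℂ) - EH L M' N') := by
    simp only [Ptilde, ← hBc]
    abel
  have hQunit : IsUnit (Ptilde L QΔt At μ) := by rw [hQeq]; exact hQunit'
  have hQbound : ‖(Ptilde L QΔt At μ)⁻¹‖ ≤ 2 * (μ⁻¹ * ‖Bcinv‖) := by
    rw [hQeq]
    calc ‖(-((μ:ℂ) • Bc) + (1 - EH L M' N'))⁻¹‖ ≤ 2 * ‖-((μ:ℂ)⁻¹ • Bcinv)‖ := hQbound'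
      _ = 2 * (μ⁻¹ * ‖Bcinv‖) := by rw [hvinv_norm]
  refine ⟨hPunit, hQunit, ?_⟩
  have hPd : IsUnit (Phat L QΔ A μ).det :=
    (Matrix.isUnit_iff_isUnit_det _).mp hPunit
  -- the smoother identity
  have hC : Cmat L Q A μ = Phat L QΔ A μ - (μ:ℂ) • S - EH L M N := by
    simp only [Cmat, Phat, ← hX, ← hBf]
    rw [← f7, smul_add]
    abel
  have e1 : Phat L QΔ A μ * Tsmooth L Q QΔ A μ = (μ:ℂ) • S + EH L M N := by
    simp only [Tsmooth]
    rw [mul_sub, mul_one, Matrix.mul_nonsing_inv_cancel_left _ _ hPd, hC]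
    abel
  have hPD : Phat L QΔ A μ * D = D + (μ:ℂ) • S := by
    rw [hPeq, add_mul, one_mul, neg_mul, smul_mul_assoc, f5, smul_neg, neg_neg]
    abel
  have e2 : Phat L QΔ A μ * (D + (Phat L QΔ A μ)⁻¹ * K) = (μ:ℂ) • S + EH L M N := by
    rw [mul_add, Matrix.mul_nonsing_inv_cancel_left _ _ hPd, hPD, hK]
    abel
  have hTs : Tsmooth L Q QΔ A μ = D + (Phat L QΔ A μ)⁻¹ * K := by
    have h12 : Phat L QΔ A μ * Tsmooth L Q QΔ A μ
        = Phat L QΔ A μ * (D + (Phat L QΔ A μ)⁻¹ * K) := by rw [e1, e2]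
    calc Tsmooth L Q QΔ A μ
        = (Phat L QΔ A μ)⁻¹ * (Phat L QΔ A μ * Tsmooth L Q QΔ A μ) :=
          (Matrix.nonsing_inv_mul_cancel_left _ _ hPd).symm
      _ = (Phat L QΔ A μ)⁻¹ * (Phat L QΔ A μ * (D + (Phat L QΔ A μ)⁻¹ * K)) := by rw [h12]
      _ = D + (Phat L QΔ A μ)⁻¹ * K := Matrix.nonsing_inv_mul_cancel_left _ _ hPd
  -- norm of the smoother residual
  set R : Matrix (Fin L × Fin M × Fin N) (Fin L × Fin M × Fin N) ℂ :=
    (Phat L QΔ A μ)⁻¹ * K with hR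
  have hRn : ‖R‖ ≤ c₁ / μ := by
    calc ‖R‖ ≤ ‖(Phat L QΔ A μ)⁻¹‖ * ‖K‖ := norm_mul_le _ _
      _ ≤ (2 * (μ⁻¹ * ‖Bfinv‖)) * ‖K‖ :=
          mul_le_mul_of_nonneg_right hPbound (norm_nonneg _)
      _ = c₁ / μ := by rw [hc₁]; field_simp; try ring
  have hRn1 : ‖R‖ ≤ 1 := by
    refine hRn.trans ?_
    rw [div_le_one hμ0]
    exact hμc₁
  -- norm of Tsmooth ^ k
  have hTsk : ‖Tsmooth L Q QΔ A μ ^ k‖ ≤ (k : ℝ) * (c₁ / μ) * (‖D‖ + 1) ^ k := by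
    have h0 : Tsmooth L Q QΔ A μ ^ k = (D + R) ^ k - D ^ k := by
      rw [hTs, f6, sub_zero]
    calc ‖Tsmooth L Q QΔ A μ ^ k‖ = ‖(D + R) ^ k - D ^ k‖ := by rw [h0]
      _ ≤ (‖D‖ + ‖R‖) ^ k - ‖D‖ ^ k := norm_add_pow_sub D R k
      _ ≤ (k : ℝ) * ‖R‖ * (‖D‖ + 1) ^ k :=
          real_pow_bound ‖D‖ ‖R‖ (norm_nonneg _) (norm_nonneg _) hRn1 k
      _ ≤ (k : ℝ) * (c₁ / μ) * (‖D‖ + 1) ^ k := by gcongr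
  -- norm of Tcgc
  have hCn : ‖Cmat L Q A μ‖ ≤ μ * (1 + ‖X‖ + ‖EH L M N‖) := by
    have : Cmat L Q A μ = 1 - (μ:ℂ) • X - EH L M N := by simp only [Cmat, ← hX]
    rw [this]
    calc ‖(1 : Matrix (Fin L × Fin M × Fin N) (Fin L × Fin M × Fin N) ℂ)
          - (μ:ℂ) • X - EH L M N‖
        ≤ ‖(1 : Matrix (Fin L × Fin M × Fin N) (Fin L × Fin M × Fin N) ℂ)
          - (μ:ℂ) • X‖ + ‖EH L M N‖ := norm_sub_le _ _
      _ ≤ ‖(1 : Matrix (Fin L × Fin M × Fin N) (Fin L × Fin M × Fin N) ℂ)‖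
          + ‖(μ:ℂ) • X‖ + ‖EH L M N‖ := by gcongr; exact norm_sub_le _ _
      _ = 1 + μ * ‖X‖ + ‖EH L M N‖ := by rw [norm_one, norm_smul, hnμ]
      _ ≤ μ * (1 + ‖X‖ + ‖EH L M N‖) := by nlinarith [norm_nonneg X, norm_nonneg (EH L M N)]
  have hTcgcn : ‖Tcgc L Q A QΔt At TFQ TFA TCQ TCA μ‖ ≤ c₂ := by
    have t1 : ‖TCFmat L TCQ TCA * (Ptilde L QΔt At μ)⁻¹ * TFCmat L TFQ TFA
        * Cmat L Q A μ‖ ≤ ‖TCFmat L TCQ TCA‖ * ‖(Ptilde L QΔt At μ)⁻¹‖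
        * ‖TFCmat L TFQ TFA‖ * ‖Cmat L Q A μ‖ := by
      calc ‖TCFmat L TCQ TCA * (Ptilde L QΔt At μ)⁻¹ * TFCmat L TFQ TFA * Cmat L Q A μ‖
          ≤ ‖TCFmat L TCQ TCA * (Ptilde L QΔt At μ)⁻¹ * TFCmat L TFQ TFA‖
            * ‖Cmat L Q A μ‖ := Matrix.linfty_opNorm_mul _ _
        _ ≤ ‖TCFmat L TCQ TCA * (Ptilde L QΔt At μ)⁻¹‖ * ‖TFCmat L TFQ TFA‖
            * ‖Cmat L Q A μ‖ := by
            gcongr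
            exact Matrix.linfty_opNorm_mul _ _
        _ ≤ ‖TCFmat L TCQ TCA‖ * ‖(Ptilde L QΔt At μ)⁻¹‖ * ‖TFCmat L TFQ TFA‖
            * ‖Cmat L Q A μ‖ := by
            gcongr
            exact Matrix.linfty_opNorm_mul _ _
    have t2 : ‖TCFmat L TCQ TCA‖ * ‖(Ptilde L QΔt At μ)⁻¹‖ * ‖TFCmat L TFQ TFA‖
        * ‖Cmat L Q A μ‖ ≤ ‖TCFmat L TCQ TCA‖ * (2 * (μ⁻¹ * ‖Bcinv‖))
        * ‖TFCmat L TFQ TFA‖ * (μ * (1 + ‖X‖ + ‖EH L M N‖)) := by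
      gcongr
    have t3 : ‖TCFmat L TCQ TCA‖ * (2 * (μ⁻¹ * ‖Bcinv‖)) * ‖TFCmat L TFQ TFA‖
        * (μ * (1 + ‖X‖ + ‖EH L M N‖)) = 2 * ‖TCFmat L TCQ TCA‖ * ‖Bcinv‖
        * ‖TFCmat L TFQ TFA‖ * (1 + ‖X‖ + ‖EH L M N‖) := by
      field_simp
    calc ‖Tcgc L Q A QΔt At TFQ TFA TCQ TCA μ‖
        ≤ ‖(1 : Matrix (Fin L × Fin M × Fin N) (Fin L × Fin M × Fin N) ℂ)‖
          + ‖TCFmat L TCQ TCA * (Ptilde L QΔt At μ)⁻¹ * TFCmat L TFQ TFA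
          * Cmat L Q A μ‖ := by
          simp only [Tcgc]
          exact norm_sub_le _ _
      _ ≤ 1 + 2 * ‖TCFmat L TCQ TCA‖ * ‖Bcinv‖ * ‖TFCmat L TFQ TFA‖
          * (1 + ‖X‖ + ‖EH L M N‖) := by
          rw [norm_one]
          have := t1.trans (t2.trans_eq t3)
          linarith
      _ = c₂ := by rw [hc₂]
  -- final bound
  have hfin : ‖Tsmooth L Q QΔ A μ ^ k * Tcgc L Q A QΔt At TFQ TFA TCQ TCA μ‖
      ≤ ((k : ℝ) * c₁ * (‖D‖ + 1) ^ k * c₂ + 1) / μ := by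
    have hTsk0 : (0:ℝ) ≤ (k : ℝ) * (c₁ / μ) * (‖D‖ + 1) ^ k := by positivity
    calc ‖Tsmooth L Q QΔ A μ ^ k * Tcgc L Q A QΔt At TFQ TFA TCQ TCA μ‖
        ≤ ‖Tsmooth L Q QΔ A μ ^ k‖ * ‖Tcgc L Q A QΔt At TFQ TFA TCQ TCA μ‖ :=
          norm_mul_le _ _
      _ ≤ ((k : ℝ) * (c₁ / μ) * (‖D‖ + 1) ^ k) * c₂ := by
          apply mul_le_mul hTsk hTcgcn (norm_nonneg _) hTsk0
      _ = ((k : ℝ) * c₁ * (‖D‖ + 1) ^ k * c₂) / μ := by field_simp; try ring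
      _ ≤ ((k : ℝ) * c₁ * (‖D‖ + 1) ^ k * c₂ + 1) / μ := by gcongr <;> linarith
  calc spectralRadius ℂ (Tsmooth L Q QΔ A μ ^ k * Tcgc L Q A QΔt At TFQ TFA TCQ TCA μ)
      ≤ ↑‖Tsmooth L Q QΔ A μ ^ k * Tcgc L Q A QΔt At TFQ TFA TCQ TCA μ‖₊ :=
        spectrum.spectralRadius_le_nnnorm (𝕜 := ℂ) _
    _ = ENNReal.ofReal ‖Tsmooth L Q QΔ A μ ^ k * Tcgc L Q A QΔt At TFQ TFA TCQ TCA μ‖ :=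
        (ofReal_norm _).symm
    _ ≤ ENNReal.ofReal (((k : ℝ) * c₁ * (‖D‖ + 1) ^ k * c₂ + 1) / μ) :=
        ENNReal.ofReal_le_ofReal hfin
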